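/- arXiv:2303.02791 — 2 statements merged into one kernel-verified Lean document; each statement's English description precedes it below -/
import Mathlib

section
/- Let G be a finite simple graph with edge set E(G) = {e_1,...,e_r} and let s be an integer with 1 ≤ s ≤ match(G). Suppose u = e_{i_1}⋯e_{i_s} is a minimal monomial generator of I(G)^[s] (so {e_{i_1},...,e_{i_s}} is a matching of G). Then (I(G)^{s+1} : u) = ( (I(G)^{2} : e_{i_1})^{s} : e_{i_2}⋯e_{i_s} ), where for a squarefree monomial ideal J, J^{s} denotes the squarefree part of its s-th symbolic power. -/
open MvPolynomial

noncomputable section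

/-! Generalities on graded pieces, Betti numbers and Castelnuovo–Mumford regularity
of homogeneous ideals in a polynomial ring, via the Koszul complex. -/

variable (K : Type) [Field K] (n : ℕ)

/-- The degree `d` graded piece of an ideal `I ⊆ K[x_1, …, x_n]`, as a `K`-subspace
(`⊥` for negative `d`). -/
def degPiece (I : Ideal (MvPolynomial (Fin n) K)) (d : ℤ) :
    Submodule K (MvPolynomial (Fin n) K) :=
  if 0 ≤ d then (Submodule.restrictScalars K I) ⊓ homogeneousSubmodule (Fin n) K d.toNat
  else ⊥

theorem mulX_mem (I : Ideal (MvPolynomial (Fin n) K)) (k : Fin n) (d : ℤ)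
    {x : MvPolynomial (Fin n) K} (hx : x ∈ degPiece K n I d) :
    (X k : MvPolynomial (Fin n) K) * x ∈ degPiece K n I (d + 1) := by
  by_cases h : 0 ≤ d
  · rw [degPiece, if_pos h, Submodule.mem_inf] at hx
    rw [degPiece, if_pos (by omega : (0:ℤ) ≤ d + 1), Submodule.mem_inf]
    constructor
    · exact Ideal.mul_mem_left I _ hx.1
    · rw [mem_homogeneousSubmodule]
      have h2 := (isHomogeneous_X K k).mul ((mem_homogeneousSubmodule _ _).1 hx.2)
      have h3 : (d + 1).toNat = 1 + d.toNat := by omega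
      rw [h3]
      exact h2
  · rw [degPiece, if_neg h, Submodule.mem_bot] at hx
    subst hx
    rw [mul_zero]
    exact Submodule.zero_mem _

/-- Multiplication by the variable `x_k`, as a map between graded pieces. -/
def mulXmap (I : Ideal (MvPolynomial (Fin n) K)) (k : Fin n) (d e : ℤ) (h : e = d + 1) :
    degPiece K n I d →ₗ[K] degPiece K n I e :=
  LinearMap.restrict (LinearMap.mulLeft K (X k)) (by
    intro x hx
    subst h
    simpa using mulX_mem K n I k d hx)

/-- The differential, in internal degree `j`, of the complex obtained by tensoring the
ideal `I` with the Koszul complex on `x_1, …, x_n`; its homology computes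
`Tor_i(I, K)_j`, whose dimension is the graded Betti number `β_{i,j}(I)`. -/
def koszulD (I : Ideal (MvPolynomial (Fin n) K)) (j i : ℕ) :
    ({T : Finset (Fin n) // T.card = i + 1} → degPiece K n I ((j : ℤ) - (i + 1)))
      →ₗ[K] ({T : Finset (Fin n) // T.card = i} → degPiece K n I ((j : ℤ) - i)) :=
  LinearMap.pi fun T => ∑ k : Fin n,
    if h : k ∈ T.1 then 0
    else ((-1 : K) ^ (T.1.filter (fun l => l < k)).card) •
      ((mulXmap K n I k ((j : ℤ) - (i + 1)) ((j : ℤ) - i) (by ring)).comp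
        (LinearMap.proj (⟨insert k T.1, by
          rw [Finset.card_insert_of_notMem h, T.2]⟩ : {T : Finset (Fin n) // T.card = i + 1})))

/-- The cycles of the (internal degree `j`) Koszul complex of `I` in homological degree `i`. -/
def kerChain (I : Ideal (MvPolynomial (Fin n) K)) (j : ℕ) :
    (i : ℕ) → Submodule K ({T : Finset (Fin n) // T.card = i} → degPiece K n I ((j : ℤ) - i))
  | 0 => ⊤
  | (i + 1) => LinearMap.ker (koszulD K n I j i)

/-- The graded Betti number `β_{i,j}(I) = dim_K Tor_i(I, K)_j`. -/
def betti (I : Ideal (MvPolynomial (Fin n) K)) (i j : ℕ) : ℕ :=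
  Module.finrank K (kerChain K n I j i) -
    Module.finrank K
      ((LinearMap.range (koszulD K n I j i) ⊓ kerChain K n I j i) : Submodule K _)

/-- The Castelnuovo–Mumford regularity `reg(I) = max { j - i | β_{i,j}(I) ≠ 0 }`. -/
def reg (I : Ideal (MvPolynomial (Fin n) K)) : ℤ :=
  sSup {r : ℤ | ∃ i j : ℕ, betti K n I i j ≠ 0 ∧ r = (j : ℤ) - i}

/-- The squarefree part of a monomial ideal: the ideal generated by the squarefree
monomials belonging to it. -/
def sqfreePart (I : Ideal (MvPolynomial (Fin n) K)) : Ideal (MvPolynomial (Fin n) K) :=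
  Ideal.span {m | m ∈ I ∧ ∃ A : Finset (Fin n), m = ∏ v ∈ A, X v}

/-- The `s`-th symbolic power of a (squarefree monomial) ideal:
the intersection of the `s`-th powers of its minimal primes; `S` for `s ≤ 0`. -/
def symbPow (I : Ideal (MvPolynomial (Fin n) K)) (s : ℤ) : Ideal (MvPolynomial (Fin n) K) :=
  if s ≤ 0 then ⊤ else ⨅ p ∈ I.minimalPrimes, p ^ s.toNat

/-- `ssp I s` is `I^{s}`, the squarefree part of the `s`-th symbolic power of `I`. -/
def ssp (I : Ideal (MvPolynomial (Fin n) K)) (s : ℤ) : Ideal (MvPolynomial (Fin n) K) :=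
  sqfreePart K n (symbPow K n I s)

/-- `sqPow I s` is `I^[s]`, the squarefree part of the ordinary power `I^s`. -/
def sqPow (I : Ideal (MvPolynomial (Fin n) K)) (s : ℕ) : Ideal (MvPolynomial (Fin n) K) :=
  sqfreePart K n (I ^ s)

/-- The height of an ideal: the minimum of the heights of its minimal primes. -/
def heightI (I : Ideal (MvPolynomial (Fin n) K)) : ℕ∞ :=
  ⨅ p : I.minimalPrimes, Order.height (⟨p.1, p.2.1.1⟩ : PrimeSpectrum (MvPolynomial (Fin n) K))

/-- The colon ideal `(I : u)`. -/
def colonOf (I : Ideal (MvPolynomial (Fin n) K)) (u : MvPolynomial (Fin n) K) :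
    Ideal (MvPolynomial (Fin n) K) :=
  Submodule.colon I (Ideal.span {u})

/-- `u` is a minimal monomial generator of the monomial ideal `I`:
`u` is a monomial belonging to `I` and `u/x_k ∉ I` for every variable `x_k` dividing `u`. -/
def IsMinGen (I : Ideal (MvPolynomial (Fin n) K)) (u : MvPolynomial (Fin n) K) : Prop :=
  ∃ d : Fin n →₀ ℕ, u = monomial d (1 : K) ∧ u ∈ I ∧
    ∀ k : Fin n, d k ≠ 0 → monomial (d - Finsupp.single k 1) (1 : K) ∉ I

/-! Graph-theoretic notions. -/

/-- The graph obtained from `G` by deleting the vertices in `U` (and all edges meeting `U`),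
on the same vertex set. -/
def delVerts (G : SimpleGraph (Fin n)) (U : Set (Fin n)) : SimpleGraph (Fin n) where
  Adj v w := G.Adj v w ∧ v ∉ U ∧ w ∉ U
  symm := ⟨fun _ _ h => ⟨h.1.symm, h.2.2, h.2.1⟩⟩
  loopless := ⟨fun v h => G.loopless.irrefl v h.1⟩


/-- The edge ideal `I(G)` of a graph `G` on the vertex set `{x_1, …, x_n}`. -/
def edgeIdeal (G : SimpleGraph (Fin n)) : Ideal (MvPolynomial (Fin n) K) :=
  Ideal.span {m | ∃ v w, G.Adj v w ∧ m = X v * X w}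

/-- `a`, `b` enumerate the endpoints of a matching of `G` of size `k`:
the edges `a i b i` are pairwise disjoint edges of `G`. -/
def IsMatching (G : SimpleGraph (Fin n)) (k : ℕ) (a b : Fin k → Fin n) : Prop :=
  (∀ i, G.Adj (a i) (b i)) ∧
    ∀ i j, i ≠ j → a i ≠ a j ∧ b i ≠ b j ∧ a i ≠ b j

/-- The matching number `match(G)`. -/
def matchNum (G : SimpleGraph (Fin n)) : ℕ :=
  sSup {k | ∃ a b : Fin k → Fin n, IsMatching n G k a b}

/-- An induced matching: a matching such that no edge of `G` other than the matching edges
joins two of its vertices. -/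
def IsInducedMatching (G : SimpleGraph (Fin n)) (k : ℕ) (a b : Fin k → Fin n) : Prop :=
  IsMatching n G k a b ∧ ∀ i j, i ≠ j →
    ¬ G.Adj (a i) (a j) ∧ ¬ G.Adj (a i) (b j) ∧ ¬ G.Adj (b i) (a j) ∧ ¬ G.Adj (b i) (b j)

/-- The induced matching number `ind-match(G)`. -/
def indMatchNum (G : SimpleGraph (Fin n)) : ℕ :=
  sSup {k | ∃ a b : Fin k → Fin n, IsInducedMatching n G k a b}

/-- An ordered matching `{a_i b_i}`: the `a_i` form an independent set and
`a_i b_j ∈ E(G)` implies `i ≤ j`. -/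
def IsOrderedMatching (G : SimpleGraph (Fin n)) (k : ℕ) (a b : Fin k → Fin n) : Prop :=
  IsMatching n G k a b ∧ (∀ i j, ¬ G.Adj (a i) (a j)) ∧ ∀ i j, G.Adj (a i) (b j) → i ≤ j

/-- The ordered matching number `ord-match(G)`. -/
def ordMatchNum (G : SimpleGraph (Fin n)) : ℕ :=
  sSup {k | ∃ a b : Fin k → Fin n, IsOrderedMatching n G k a b}

/-- A graph is chordal if it has no induced cycle of length at least four. -/
def IsChordal (G : SimpleGraph (Fin n)) : Prop :=
  ∀ k : ℕ, 4 ≤ k → ∀ f : ZMod k → Fin n, Function.Injective f →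
    ¬ (∀ i j : ZMod k, G.Adj (f i) (f j) ↔ (j = i + 1 ∨ i = j + 1))


/-- The star triangle graph with `t` triangles: vertex `0` is the common vertex of all the
triangles, and for `0 ≤ i < t` the vertices `2i+1`, `2i+2` are the other two vertices of the
`i`-th triangle. -/
def starTriangle (t : ℕ) : SimpleGraph (Fin (2 * t + 1)) where
  Adj u v := u ≠ v ∧ ((u : ℕ) = 0 ∨ (v : ℕ) = 0 ∨ ((u : ℕ) - 1) / 2 = ((v : ℕ) - 1) / 2)
  symm := by
    constructor
    intro u v h
    exact ⟨h.1.symm, by tauto⟩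
  loopless := by constructor; intro u h; exact h.1 rfl

end
namespace SSPAux
open MvPolynomial Finset
noncomputable section
variable {K : Type} [Field K] {n : ℕ}

/-- exponent vector of a squarefree monomial -/
def ind (A : Finset (Fin n)) : Fin n →₀ ℕ := A.1.toFinsupp

lemma ind_apply (A : Finset (Fin n)) (v : Fin n) : ind A v = if v ∈ A then 1 else 0 := by
  simp only [ind, Multiset.toFinsupp_apply]
  rw [Multiset.count_eq_of_nodup A.nodup]; rfl

lemma ind_support (A : Finset (Fin n)) : (ind A).support = A := by
  ext v; simp [ind_apply, Finsupp.mem_support_iff]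

lemma ind_le_iff (A : Finset (Fin n)) (m : Fin n →₀ ℕ) : ind A ≤ m ↔ A ⊆ m.support := by
  constructor
  · intro h v hv
    have := h v
    rw [ind_apply, if_pos hv] at this
    simp only [Finsupp.mem_support_iff]; omega
  · intro h v
    rw [ind_apply]
    split
    · next hv => have := h hv; simp only [Finsupp.mem_support_iff] at this; omega
    · omega

lemma ind_union {A B : Finset (Fin n)} (h : Disjoint A B) : ind (A ∪ B) = ind A + ind B := by
  ext v
  simp only [Finsupp.add_apply, ind_apply, Finset.mem_union]
  by_cases hA : v ∈ A
  · have : v ∉ B := fun hB => (Finset.disjoint_left.1 h hA hB)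
    simp [hA, this]
  · by_cases hB : v ∈ B <;> simp [hA, hB]

lemma support_add_nat (m e : Fin n →₀ ℕ) : (m + e).support = m.support ∪ e.support := by
  ext v
  simp only [Finsupp.mem_support_iff, Finset.mem_union, Finsupp.add_apply]
  omega

lemma sum_single_eq_ind (A : Finset (Fin n)) : (∑ v ∈ A, Finsupp.single v 1) = ind A := by
  ext w
  rw [Finsupp.finset_sum_apply, ind_apply]
  simp_rw [Finsupp.single_apply]
  rw [Finset.sum_ite_eq' A w (fun _ => 1)]

/-- squarefree monomial on vertex set A -/
def sqm (K : Type) [Field K] {n : ℕ} (A : Finset (Fin n)) : MvPolynomial (Fin n) K :=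
  monomial (ind A) 1

lemma prod_monomial {α : Type*} (T : Finset α) (d : α → (Fin n →₀ ℕ)) :
    (∏ i ∈ T, (monomial (d i) (1:K))) = monomial (∑ i ∈ T, d i) 1 := by
  induction T using Finset.cons_induction with
  | empty => simp
  | cons i T hi ih =>
    rw [Finset.prod_cons, Finset.sum_cons, ih, monomial_mul, one_mul]

lemma prod_X_eq_sqm (A : Finset (Fin n)) : (∏ v ∈ A, (X v : MvPolynomial (Fin n) K)) = sqm K A := by
  have : ∀ v : Fin n, (X v : MvPolynomial (Fin n) K) = monomial (Finsupp.single v 1) 1 := by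
    intro v; rfl
  simp_rw [this]
  rw [prod_monomial, sum_single_eq_ind]; rfl

lemma sqm_mul {A B : Finset (Fin n)} (h : Disjoint A B) :
    sqm K A * sqm K B = sqm K (A ∪ B) := by
  rw [sqm, sqm, sqm, monomial_mul, one_mul, ind_union h]

lemma support_mul_monomial (f : MvPolynomial (Fin n) K) (e : Fin n →₀ ℕ) :
    (f * monomial e 1).support = f.support.map (addRightEmbedding e) := by
  rw [← single_eq_monomial]
  exact AddMonoidAlgebra.support_coeff_mul_single f 1 (by simp) e

lemma mem_span_mono_mul (S : Set (Fin n →₀ ℕ)) (f : MvPolynomial (Fin n) K) (e : Fin n →₀ ℕ) :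
    f * monomial e 1 ∈ Ideal.span ((fun d => monomial d (1:K)) '' S) ↔
      ∀ m ∈ f.support, ∃ d ∈ S, d ≤ m + e := by
  rw [mem_ideal_span_monomial_image]
  constructor
  · intro h m hm
    exact h (m + e) (by rw [support_mul_monomial]; exact Finset.mem_map.2 ⟨m, hm, rfl⟩)
  · intro h m hm
    rw [support_mul_monomial, Finset.mem_map] at hm
    obtain ⟨m', hm', rfl⟩ := hm
    exact h m' hm'

/-- the squarefree part of an ideal, as a span of a monomial image -/
lemma sqfreePart_eq_span (T : Ideal (MvPolynomial (Fin n) K)) :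
    sqfreePart K n T =
      Ideal.span ((fun d => monomial d (1:K)) ''
        {d | (∃ A : Finset (Fin n), d = ind A) ∧ monomial d (1:K) ∈ T}) := by
  rw [sqfreePart]
  congr 1
  ext m
  constructor
  · rintro ⟨hmT, A, rfl⟩
    refine ⟨ind A, ⟨⟨A, rfl⟩, ?_⟩, (prod_X_eq_sqm A).symm⟩
    rw [prod_X_eq_sqm] at hmT
    exact hmT
  · rintro ⟨d, ⟨⟨A, rfl⟩, hT⟩, rfl⟩
    exact ⟨hT, A, (prod_X_eq_sqm A).symm⟩

/-- membership of `f * monomial e 1` in the squarefree part of an ideal -/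
lemma mem_sqfreePart_mul (T : Ideal (MvPolynomial (Fin n) K)) (f : MvPolynomial (Fin n) K)
    (e : Fin n →₀ ℕ) :
    f * monomial e 1 ∈ sqfreePart K n T ↔
      ∀ m ∈ f.support, sqm K (m + e).support ∈ T := by
  rw [sqfreePart_eq_span, mem_span_mono_mul]
  refine forall₂_congr fun m hm => ?_
  constructor
  · rintro ⟨d, ⟨⟨A, rfl⟩, hT⟩, hle⟩
    have hA : A ⊆ (m + e).support := (ind_le_iff A (m + e)).1 hle
    have : sqm K A * sqm K ((m + e).support \ A) = sqm K ((m + e).support) := by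
      rw [sqm_mul (Finset.disjoint_sdiff), Finset.union_sdiff_of_subset hA]
    rw [← this]
    exact Ideal.mul_mem_right _ _ hT
  · intro h
    exact ⟨ind ((m + e).support), ⟨⟨_, rfl⟩, h⟩, (ind_le_iff _ _).2 (le_refl _)⟩


/-- the monomial prime ideal attached to a set of variables -/
def pD (K : Type) [Field K] {n : ℕ} (D : Finset (Fin n)) : Ideal (MvPolynomial (Fin n) K) :=
  Ideal.span (X '' (D : Set (Fin n)))

lemma mem_pD (D : Finset (Fin n)) (f : MvPolynomial (Fin n) K) :
    f ∈ pD K D ↔ ∀ m ∈ f.support, ∃ v ∈ D, m v ≠ 0 := by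
  rw [pD, mem_ideal_span_X_image]
  simp

lemma X_mem_pD (D : Finset (Fin n)) (v : Fin n) : (X v : MvPolynomial (Fin n) K) ∈ pD K D ↔ v ∈ D := by
  rw [mem_pD]
  simp only [support_X]
  constructor
  · intro h
    obtain ⟨w, hw, hne⟩ := h (Finsupp.single v 1) (by simp)
    rw [Finsupp.single_apply] at hne
    rcases eq_or_ne v w with rfl | h2
    · exact hw
    · simp [h2] at hne
  · intro hv m hm
    simp only [Finset.mem_singleton] at hm
    subst hm
    exact ⟨v, hv, by simp⟩

lemma pD_le_pD {D E : Finset (Fin n)} : pD K D ≤ pD K E ↔ D ⊆ E := by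
  constructor
  · intro h v hv
    exact (X_mem_pD E v).1 (h ((X_mem_pD D v).2 hv))
  · intro h
    rw [pD, Ideal.span_le]
    rintro _ ⟨v, hv, rfl⟩
    exact (X_mem_pD E v).2 (h hv)

lemma pD_prime (D : Finset (Fin n)) : (pD K D).IsPrime := by
  have hker : pD K D = RingHom.ker (aeval (fun v : Fin n =>
      if v ∈ D then (0 : MvPolynomial (Fin n) K) else X v)).toRingHom := by
    apply le_antisymm
    · rw [pD, Ideal.span_le]
      rintro _ ⟨v, hv, rfl⟩
      have hv' : v ∈ D := hv
      simp [RingHom.mem_ker, hv']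
    · intro f hf
      rw [RingHom.mem_ker] at hf
      rw [mem_pD]
      by_contra hcon
      push_neg at hcon
      obtain ⟨m₀, hm₀, hm₀D⟩ := hcon
      set φ : MvPolynomial (Fin n) K →ₐ[K] MvPolynomial (Fin n) K := aeval (fun v : Fin n =>
        if v ∈ D then (0 : MvPolynomial (Fin n) K) else X v) with hφ
      have key : ∀ m : Fin n →₀ ℕ, ∀ c : K,
          φ (monomial m c) = if ∀ v ∈ D, m v = 0 then monomial m c else 0 := by
        intro m c
        rw [aeval_monomial]
        split
        · next hcond =>
          have : (m.prod fun v k => (if v ∈ D then (0 : MvPolynomial (Fin n) K) else X v) ^ k)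
              = m.prod fun v k => (X v) ^ k := by
            apply Finsupp.prod_congr
            intro v hv
            have : v ∉ D := by
              intro hvD
              exact (Finsupp.mem_support_iff.1 hv) (hcond v hvD)
            rw [if_neg this]
          rw [this, monomial_eq, algebraMap_eq]
        · next hcond =>
          push_neg at hcond
          obtain ⟨v, hvD, hv⟩ := hcond
          have : (m.prod fun v k => (if v ∈ D then (0 : MvPolynomial (Fin n) K) else X v) ^ k) = 0 := by
            rw [Finsupp.prod]
            apply Finset.prod_eq_zero (Finsupp.mem_support_iff.2 hv)
            rw [if_pos hvD, zero_pow hv]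
          rw [this, mul_zero]
      have : φ f = ∑ m ∈ f.support, if ∀ v ∈ D, m v = 0 then monomial m (coeff m f) else 0 := by
        conv_lhs => rw [← support_sum_monomial_coeff f]
        rw [map_sum]
        exact Finset.sum_congr rfl fun m _ => key m _
      have hc : coeff m₀ (φ f) = coeff m₀ f := by
        rw [this, coeff_sum]
        rw [Finset.sum_eq_single m₀]
        · rw [if_pos (fun v hv => hm₀D v hv), coeff_monomial, if_pos rfl]
        · intro m hm hne
          split
          · rw [coeff_monomial, if_neg hne]
          · exact coeff_zero _
        · intro h
          exact absurd hm₀ h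
      rw [show φ f = 0 from hf] at hc
      rw [coeff_zero] at hc
      exact (Finsupp.mem_support_iff.1 hm₀) hc.symm
  rw [hker]
  exact RingHom.ker_isPrime _


lemma prod_X_mem_pow {D T : Finset (Fin n)} (h : T ⊆ D) :
    (∏ v ∈ T, (X v : MvPolynomial (Fin n) K)) ∈ pD K D ^ T.card := by
  induction T using Finset.cons_induction with
  | empty => simp
  | cons i T hi ih =>
    rw [Finset.prod_cons, Finset.card_cons, pow_succ']
    exact Ideal.mul_mem_mul ((X_mem_pD D i).2 (h (Finset.mem_cons_self i T)))
      (ih (fun v hv => h (Finset.mem_cons.2 (Or.inr hv))))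

lemma card_inter_eq_sum (D A : Finset (Fin n)) : (∑ v ∈ D, ind A v) = (D ∩ A).card := by
  simp_rw [ind_apply]
  rw [Finset.sum_ite_mem]
  simp

lemma pD_pow_le (D : Finset (Fin n)) (t : ℕ) :
    pD K D ^ t ≤ Ideal.span ((fun d => monomial d (1:K)) '' {d | t ≤ ∑ v ∈ D, d v}) := by
  induction t with
  | zero =>
    rw [pow_zero, Ideal.one_eq_top, top_le_iff, Ideal.eq_top_iff_one]
    exact Ideal.subset_span ⟨0, by simp, by simp [monomial_zero']⟩
  | succ t ih =>
    rw [pow_succ]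
    calc pD K D ^ t * pD K D
        ≤ Ideal.span ((fun d => monomial d (1:K)) '' {d | t ≤ ∑ v ∈ D, d v}) * pD K D :=
          Ideal.mul_mono_left ih
      _ ≤ _ := by
          rw [pD, Ideal.span_mul_span, Ideal.span_le]
          rintro x hx
          rw [Set.mem_mul] at hx
          obtain ⟨r, ⟨d, hd, rfl⟩, s, ⟨v, hv, rfl⟩, hx⟩ := hx
          subst hx
          have hv' : v ∈ D := hv
          have : (monomial d (1:K)) * X v = monomial (d + Finsupp.single v 1) 1 := by
            rw [show (X v : MvPolynomial (Fin n) K) = monomial (Finsupp.single v 1) 1 from rfl,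
              monomial_mul, one_mul]
          rw [this]
          apply Ideal.subset_span
          refine ⟨d + Finsupp.single v 1, ?_, rfl⟩
          simp only [Set.mem_setOf_eq] at hd
          simp only [Set.mem_setOf_eq, Finsupp.add_apply, Finset.sum_add_distrib]
          have : (∑ w ∈ D, Finsupp.single v 1 w) = 1 := by
            simp_rw [Finsupp.single_apply]
            rw [Finset.sum_ite_eq D v (fun _ => 1), if_pos hv']
          omega

lemma sqm_mem_pD_pow (A D : Finset (Fin n)) (t : ℕ) :
    sqm K A ∈ pD K D ^ t ↔ t ≤ (A ∩ D).card := by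
  classical
  constructor
  · intro h
    have := pD_pow_le (K := K) D t h
    rw [mem_ideal_span_monomial_image] at this
    obtain ⟨d, hd, hle⟩ := this (ind A) (by
      rw [sqm, support_monomial]
      simp)
    simp only [Set.mem_setOf_eq] at hd
    have h1 : (∑ v ∈ D, d v) ≤ ∑ v ∈ D, ind A v := Finset.sum_le_sum fun v _ => hle v
    rw [card_inter_eq_sum] at h1
    rw [Finset.inter_comm]
    omega
  · intro h
    obtain ⟨T, hT, hTcard⟩ := Finset.exists_subset_card_eq h
    have hTA : T ⊆ A := hT.trans (Finset.inter_subset_left)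
    have hTD : T ⊆ D := hT.trans (Finset.inter_subset_right)
    have : sqm K A = sqm K T * sqm K (A \ T) := by
      rw [sqm_mul Finset.disjoint_sdiff, Finset.union_sdiff_of_subset hTA]
    rw [this, ← prod_X_eq_sqm]
    rw [← hTcard]
    exact Ideal.mul_mem_right _ _ (prod_X_mem_pow hTD)

/-- `D` is a transversal of the family `F` -/
def IsTrans (F : Set (Finset (Fin n))) (D : Finset (Fin n)) : Prop :=
  ∀ B ∈ F, (B ∩ D).Nonempty

/-- the squarefree monomial ideal generated by a family of subsets -/
def famIdeal (K : Type) [Field K] {n : ℕ} (F : Set (Finset (Fin n))) :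
    Ideal (MvPolynomial (Fin n) K) :=
  Ideal.span ((fun d => monomial d (1:K)) '' (ind '' F))

lemma sqm_mem_famIdeal {F : Set (Finset (Fin n))} {B : Finset (Fin n)} (hB : B ∈ F) :
    sqm K B ∈ famIdeal K F :=
  Ideal.subset_span ⟨ind B, ⟨B, hB, rfl⟩, rfl⟩

lemma sqm_mem_pD_iff (B D : Finset (Fin n)) :
    sqm K B ∈ pD K D ↔ (B ∩ D).Nonempty := by
  classical
  rw [mem_pD]
  constructor
  · intro h
    obtain ⟨v, hv, hne⟩ := h (ind B) (by rw [sqm, support_monomial]; simp)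
    rw [ind_apply] at hne
    refine ⟨v, Finset.mem_inter.2 ⟨?_, hv⟩⟩
    by_contra hc
    simp [hc] at hne
  · rintro ⟨v, hv⟩ m hm
    rw [sqm, support_monomial] at hm
    simp only [one_ne_zero, if_false, Finset.mem_singleton] at hm
    subst hm
    rw [Finset.mem_inter] at hv
    exact ⟨v, hv.2, by rw [ind_apply, if_pos hv.1]; omega⟩

lemma famIdeal_le_pD {F : Set (Finset (Fin n))} {D : Finset (Fin n)} :
    famIdeal K F ≤ pD K D ↔ IsTrans F D := by
  constructor
  · intro h B hB
    exact (sqm_mem_pD_iff B D).1 (h (sqm_mem_famIdeal hB))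
  · intro h
    rw [famIdeal, Ideal.span_le]
    rintro _ ⟨_, ⟨B, hB, rfl⟩, rfl⟩
    exact (sqm_mem_pD_iff B D).2 (h B hB)

lemma exists_X_mem_of_sqm_mem {q : Ideal (MvPolynomial (Fin n) K)} (hq : q.IsPrime)
    {B : Finset (Fin n)} (hB : sqm K B ∈ q) : ∃ v ∈ B, X v ∈ q := by
  rw [← prod_X_eq_sqm] at hB
  induction B using Finset.cons_induction with
  | empty =>
    rw [Finset.prod_empty] at hB
    exact absurd (Ideal.eq_top_iff_one q |>.2 hB) hq.ne_top
  | cons i T hi ih =>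
    rw [Finset.prod_cons] at hB
    rcases hq.mem_or_mem hB with h | h
    · exact ⟨i, Finset.mem_cons_self i T, h⟩
    · obtain ⟨v, hv, hvq⟩ := ih h
      exact ⟨v, Finset.mem_cons.2 (Or.inr hv), hvq⟩

open Classical in
/-- the set of variables belonging to a prime -/
def Dq (q : Ideal (MvPolynomial (Fin n) K)) : Finset (Fin n) :=
  Finset.univ.filter (fun v => X v ∈ q)

lemma mem_Dq {q : Ideal (MvPolynomial (Fin n) K)} {v : Fin n} :
    v ∈ Dq q ↔ X v ∈ q := by
  simp [Dq]

lemma pD_Dq_le {q : Ideal (MvPolynomial (Fin n) K)} : pD K (Dq q) ≤ q := by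
  rw [pD, Ideal.span_le]
  rintro _ ⟨v, hv, rfl⟩
  exact mem_Dq.1 hv

lemma isTrans_Dq {F : Set (Finset (Fin n))} {q : Ideal (MvPolynomial (Fin n) K)}
    (hq : q.IsPrime) (h : famIdeal K F ≤ q) : IsTrans F (Dq q) := by
  intro B hB
  obtain ⟨v, hv, hvq⟩ := exists_X_mem_of_sqm_mem hq (h (sqm_mem_famIdeal hB))
  exact ⟨v, Finset.mem_inter.2 ⟨hv, mem_Dq.2 hvq⟩⟩

theorem minimalPrimes_famIdeal (F : Set (Finset (Fin n))) :
    (famIdeal K F).minimalPrimes = {p | ∃ D, Minimal (IsTrans F) D ∧ p = pD K D} := by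
  ext p
  constructor
  · rintro ⟨⟨hp, hle⟩, hmin⟩
    have h1 : pD K (Dq p) ≤ p := pD_Dq_le
    have h2 : IsTrans F (Dq p) := isTrans_Dq hp hle
    have h3 : p ≤ pD K (Dq p) :=
      hmin ⟨pD_prime _, famIdeal_le_pD.2 h2⟩ h1
    have hpeq : p = pD K (Dq p) := le_antisymm h3 h1
    refine ⟨Dq p, ⟨h2, ?_⟩, hpeq⟩
    intro D' hD' hsub
    have : pD K D' ≤ p := hpeq ▸ pD_le_pD.2 hsub
    have := hmin ⟨pD_prime _, famIdeal_le_pD.2 hD'⟩ this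
    rw [hpeq] at this
    exact pD_le_pD.1 this
  · rintro ⟨D, ⟨hD, hDmin⟩, rfl⟩
    refine ⟨⟨pD_prime _, famIdeal_le_pD.2 hD⟩, ?_⟩
    rintro q ⟨hq, hqle⟩ hqsub
    have h2 : IsTrans F (Dq q) := isTrans_Dq hq hqle
    have hDq : Dq q ⊆ D := by
      intro v hv
      exact (X_mem_pD D v).1 (hqsub (mem_Dq.1 hv))
    have := hDmin h2 hDq
    calc pD K D ≤ pD K (Dq q) := pD_le_pD.2 this
      _ ≤ q := pD_Dq_le

lemma exists_minimal_isTrans {F : Set (Finset (Fin n))} {D : Finset (Fin n)} (hD : IsTrans F D) :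
    ∃ D₀, Minimal (IsTrans F) D₀ ∧ D₀ ⊆ D := by
  classical
  obtain ⟨D₀, hmem, hmin⟩ := Finset.exists_min_image
    (D.powerset.filter (fun E => IsTrans F E)) Finset.card
    ⟨D, by simp [hD]⟩
  simp only [Finset.mem_filter, Finset.mem_powerset] at hmem
  refine ⟨D₀, ⟨hmem.2, ?_⟩, hmem.1⟩
  intro y hy hysub
  have hyD : y ⊆ D := hysub.trans hmem.1
  have := hmin y (by simp [Finset.mem_filter, Finset.mem_powerset, hyD, hy])
  have : y = D₀ := Finset.eq_of_subset_of_card_le hysub this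
  exact this ▸ le_refl _

lemma mem_colon_ssp (F : Set (Finset (Fin n))) (t : ℤ) (ht : 0 < t)
    (f : MvPolynomial (Fin n) K) (E : Finset (Fin n)) :
    f ∈ colonOf K n (ssp K n (famIdeal K F) t) (sqm K E) ↔
      ∀ m ∈ f.support, ∀ D, Minimal (IsTrans F) D →
        t.toNat ≤ ((m.support ∪ E) ∩ D).card := by
  rw [colonOf, Ideal.mem_colon_span_singleton, ssp,
    show sqm K E = monomial (ind E) (1:K) from rfl, mem_sqfreePart_mul]
  refine forall₂_congr fun m hm => ?_
  rw [symbPow, if_neg (by omega)]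
  rw [minimalPrimes_famIdeal]
  have hsupp : (m + ind E).support = m.support ∪ E := by
    rw [support_add_nat, ind_support]
  constructor
  · intro h D hD
    have := (Submodule.mem_iInf _).1 h (pD K D)
    have := (Submodule.mem_iInf _).1 this ⟨D, hD, rfl⟩
    rw [hsupp] at this
    exact (sqm_mem_pD_pow _ _ _).1 this
  · intro h
    rw [Submodule.mem_iInf]
    intro p
    rw [Submodule.mem_iInf]
    rintro ⟨D, hD, rfl⟩
    rw [hsupp]
    exact (sqm_mem_pD_pow _ _ _).2 (h D hD)

lemma mem_famIdeal_upclosed {F : Set (Finset (Fin n))}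
    (hF : ∀ A A', A ∈ F → A ⊆ A' → A' ∈ F) (f : MvPolynomial (Fin n) K) :
    f ∈ famIdeal K F ↔ ∀ m ∈ f.support, m.support ∈ F := by
  rw [famIdeal, mem_ideal_span_monomial_image]
  refine forall₂_congr fun m hm => ?_
  constructor
  · rintro ⟨_, ⟨A, hA, rfl⟩, hle⟩
    exact hF A m.support hA ((ind_le_iff A m).1 hle)
  · intro h
    exact ⟨ind m.support, ⟨m.support, h, rfl⟩, (ind_le_iff _ _).2 (le_refl _)⟩

lemma X_mul_X_eq_sqm {v w : Fin n} (h : v ≠ w) :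
    (X v : MvPolynomial (Fin n) K) * X w = sqm K {v, w} := by
  rw [← prod_X_eq_sqm, Finset.prod_pair h]

/-- the family of edges of a graph -/
def FG (G : SimpleGraph (Fin n)) : Set (Finset (Fin n)) := {B | ∃ v w, G.Adj v w ∧ B = {v, w}}

lemma edgeIdeal_eq_famIdeal (G : SimpleGraph (Fin n)) :
    edgeIdeal K n G = famIdeal K (FG G) := by
  rw [edgeIdeal, famIdeal]
  congr 1
  ext m
  constructor
  · rintro ⟨v, w, hvw, rfl⟩
    refine ⟨ind {v, w}, ⟨{v, w}, ⟨v, w, hvw, rfl⟩, rfl⟩, ?_⟩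
    exact (X_mul_X_eq_sqm hvw.ne).symm
  · rintro ⟨_, ⟨B, ⟨v, w, hvw, rfl⟩, rfl⟩, rfl⟩
    exact ⟨v, w, hvw, (X_mul_X_eq_sqm hvw.ne).symm⟩

lemma prod_edges_eq_sqm {s : ℕ} (a b : Fin s → Fin n)
    (hab : ∀ i, a i ≠ b i) (hd : ∀ i j, i ≠ j → a i ≠ a j ∧ b i ≠ b j ∧ a i ≠ b j)
    (T : Finset (Fin s)) :
    (∏ i ∈ T, ((X (a i) : MvPolynomial (Fin n) K) * X (b i)))
      = sqm K (T.image a ∪ T.image b) := by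
  induction T using Finset.cons_induction with
  | empty =>
    simp only [Finset.prod_empty, Finset.image_empty, Finset.empty_union]
    rw [sqm, show ind (∅ : Finset (Fin n)) = 0 from rfl]
    simp [monomial_zero']
  | cons i T hi ih =>
    rw [Finset.prod_cons, ih, X_mul_X_eq_sqm (hab i)]
    have hdisj : Disjoint ({a i, b i} : Finset (Fin n)) (T.image a ∪ T.image b) := by
      rw [Finset.disjoint_left]
      intro x hx hx2
      simp only [Finset.mem_insert, Finset.mem_singleton] at hx
      simp only [Finset.mem_union, Finset.mem_image] at hx2
      have hji : ∀ j ∈ T, j ≠ i := fun j hj => fun he => hi (he ▸ hj)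
      rcases hx2 with ⟨j, hj, rfl⟩ | ⟨j, hj, rfl⟩
      · rcases hx with h1 | h1
        · exact (hd i j (Ne.symm (hji j hj))).1 h1.symm
        · exact (hd j i (hji j hj)).2.2 h1
      · rcases hx with h1 | h1
        · exact (hd i j (Ne.symm (hji j hj))).2.2 h1.symm
        · exact (hd i j (Ne.symm (hji j hj))).2.1 h1.symm
    rw [sqm_mul hdisj]
    congr 1
    rw [Finset.cons_eq_insert, Finset.image_insert, Finset.image_insert]
    ext x
    simp only [Finset.mem_union, Finset.mem_insert, Finset.mem_singleton]
    tauto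

section Heart

variable {s : ℕ} (G : SimpleGraph (Fin n)) (a b : Fin s → Fin n) (i0 : Fin s)

/-- endpoints of the distinguished edge -/
def E0 : Finset (Fin n) := {a i0, b i0}

/-- all matching vertices -/
def Mm : Finset (Fin n) := Finset.univ.image a ∪ Finset.univ.image b

/-- matching vertices except those of the distinguished edge -/
def Mp : Finset (Fin n) :=
  (Finset.univ.erase i0).image a ∪ (Finset.univ.erase i0).image b

/-- the family generating the colon ideal `(I(G)^{2} : e_0)` -/
def FL : Set (Finset (Fin n)) :=
  {A | ∀ D, Minimal (IsTrans (FG G)) D → 2 ≤ ((A ∪ E0 a b i0) ∩ D).card}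

variable {G a b}

lemma E0_mem_FG (hm : IsMatching n G s a b) : E0 a b i0 ∈ FG G :=
  ⟨a i0, b i0, hm.1 i0, rfl⟩

lemma a_ne_b (hm : IsMatching n G s a b) : ∀ i, a i ≠ b i := fun i => (hm.1 i).ne

lemma E0_card (hm : IsMatching n G s a b) : (E0 a b i0).card = 2 :=
  Finset.card_pair (a_ne_b hm i0)

lemma E0_subset_Mm : E0 a b i0 ⊆ Mm a b := by
  intro x hx
  rcases Finset.mem_insert.1 hx with rfl | hx
  · exact Finset.mem_union_left _ (Finset.mem_image_of_mem a (Finset.mem_univ i0))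
  · rw [Finset.mem_singleton] at hx
    subst hx
    exact Finset.mem_union_right _ (Finset.mem_image_of_mem b (Finset.mem_univ i0))

lemma Mm_eq_Mp_union_E0 : Mm a b = Mp a b i0 ∪ E0 a b i0 := by
  ext x
  simp only [Mm, Mp, E0, Finset.mem_union, Finset.mem_image, Finset.mem_insert,
    Finset.mem_singleton, Finset.mem_erase, Finset.mem_univ, and_true, true_and]
  constructor
  · rintro (⟨i, rfl⟩ | ⟨i, rfl⟩)
    · rcases eq_or_ne i i0 with rfl | h
      · exact Or.inr (Or.inl rfl)
      · exact Or.inl (Or.inl ⟨i, h, rfl⟩)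
    · rcases eq_or_ne i i0 with rfl | h
      · exact Or.inr (Or.inr rfl)
      · exact Or.inl (Or.inr ⟨i, h, rfl⟩)
  · rintro ((⟨i, _, rfl⟩ | ⟨i, _, rfl⟩) | (rfl | rfl))
    · exact Or.inl ⟨i, rfl⟩
    · exact Or.inr ⟨i, rfl⟩
    · exact Or.inl ⟨i0, rfl⟩
    · exact Or.inr ⟨i0, rfl⟩

lemma disjoint_Mp_E0 (hm : IsMatching n G s a b) : Disjoint (Mp a b i0) (E0 a b i0) := by
  rw [Finset.disjoint_left]
  intro x hx hx2
  simp only [Mp, Finset.mem_union, Finset.mem_image, Finset.mem_erase, Finset.mem_univ,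
    and_true] at hx
  simp only [E0, Finset.mem_insert, Finset.mem_singleton] at hx2
  rcases hx with ⟨i, hi, rfl⟩ | ⟨i, hi, rfl⟩
  · rcases hx2 with h | h
    · exact (hm.2 i i0 hi).1 h
    · exact (hm.2 i i0 hi).2.2 h
  · rcases hx2 with h | h
    · exact (hm.2 i0 i (Ne.symm hi)).2.2 h.symm
    · exact (hm.2 i i0 hi).2.1 h

lemma E0_inter_nonempty {C : Finset (Fin n)} (hm : IsMatching n G s a b)
    (hC : IsTrans (FG G) C) : (E0 a b i0 ∩ C).Nonempty :=
  hC _ (E0_mem_FG i0 hm)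

/-- characterization of transversals of the family `FL` -/
lemma isTrans_FL_iff (hm : IsMatching n G s a b) (D : Finset (Fin n)) :
    IsTrans (FL G a b i0) D ↔
      ∃ C, Minimal (IsTrans (FG G)) C ∧ (C ∩ E0 a b i0).card = 1 ∧ C \ E0 a b i0 ⊆ D := by
  classical
  constructor
  · intro hD
    by_cases hA : (Finset.univ \ D) ∈ FL G a b i0
    · obtain ⟨x, hx⟩ := hD _ hA
      rw [Finset.mem_inter, Finset.mem_sdiff] at hx
      exact absurd hx.2 hx.1.2
    · simp only [FL, Set.mem_setOf_eq, not_forall] at hA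
      obtain ⟨C, hCmin, hcard⟩ := hA
      push_neg at hcard
      have hne : (E0 a b i0 ∩ C).Nonempty := E0_inter_nonempty i0 hm hCmin.1
      have hsub1 : C ∩ E0 a b i0 ⊆ (Finset.univ \ D ∪ E0 a b i0) ∩ C := by
        intro x hx
        rw [Finset.mem_inter] at hx ⊢
        exact ⟨Finset.mem_union_right _ hx.2, hx.1⟩
      have hcard1 : (C ∩ E0 a b i0).card = 1 := by
        have h1 : 1 ≤ (C ∩ E0 a b i0).card := Finset.card_pos.2 (by
          rwa [Finset.inter_comm] at hne)
        have h2 : (C ∩ E0 a b i0).card ≤ 1 := by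
          have := Finset.card_le_card hsub1
          omega
        omega
      refine ⟨C, hCmin, hcard1, ?_⟩
      intro x hx
      rw [Finset.mem_sdiff] at hx
      by_contra hxD
      -- then x ∈ univ \ D, x ∈ C, x ∉ E0; together with z ∈ C ∩ E0 get card ≥ 2
      obtain ⟨z, hz⟩ := hne
      rw [Finset.mem_inter] at hz
      have hxmem : x ∈ (Finset.univ \ D ∪ E0 a b i0) ∩ C :=
        Finset.mem_inter.2 ⟨Finset.mem_union_left _ (Finset.mem_sdiff.2 ⟨Finset.mem_univ x, hxD⟩),
          hx.1⟩
      have hzmem : z ∈ (Finset.univ \ D ∪ E0 a b i0) ∩ C :=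
        Finset.mem_inter.2 ⟨Finset.mem_union_right _ hz.1, hz.2⟩
      have hxz : x ≠ z := fun h => hx.2 (h ▸ hz.1)
      have : 2 ≤ ((Finset.univ \ D ∪ E0 a b i0) ∩ C).card := by
        have : ({x, z} : Finset (Fin n)) ⊆ (Finset.univ \ D ∪ E0 a b i0) ∩ C := by
          intro y hy
          rcases Finset.mem_insert.1 hy with rfl | hy
          · exact hxmem
          · rw [Finset.mem_singleton] at hy
            subst hy
            exact hzmem
        calc 2 = ({x, z} : Finset (Fin n)).card := (Finset.card_pair hxz).symm
          _ ≤ _ := Finset.card_le_card this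
      omega
  · rintro ⟨C, hCmin, hcard1, hsub⟩
    intro A hA
    have h2 : 2 ≤ ((A ∪ E0 a b i0) ∩ C).card := hA C hCmin
    have : ∃ x, x ∈ A ∩ (C \ E0 a b i0) := by
      by_contra hc
      push_neg at hc
      have hsub2 : (A ∪ E0 a b i0) ∩ C ⊆ C ∩ E0 a b i0 := by
        intro x hx
        rw [Finset.mem_inter] at hx
        rcases Finset.mem_union.1 hx.1 with hxA | hxE
        · by_cases hxE0 : x ∈ E0 a b i0
          · exact Finset.mem_inter.2 ⟨hx.2, hxE0⟩
          · exact absurd (Finset.mem_inter.2 ⟨hxA, Finset.mem_sdiff.2 ⟨hx.2, hxE0⟩⟩) (hc x)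
        · exact Finset.mem_inter.2 ⟨hx.2, hxE⟩
      have := Finset.card_le_card hsub2
      omega
    obtain ⟨x, hx⟩ := this
    rw [Finset.mem_inter] at hx
    exact ⟨x, Finset.mem_inter.2 ⟨hx.1, hsub hx.2⟩⟩

end Heart

section Heart2

variable {s : ℕ} {G : SimpleGraph (Fin n)} {a b : Fin s → Fin n} (i0 : Fin s)

lemma Mp_subset_Mm : Mp a b i0 ⊆ Mm a b := by
  rw [Mm_eq_Mp_union_E0 i0]
  exact Finset.subset_union_left

lemma count_case2 (hm : IsMatching n G s a b) (hs : 1 ≤ s) {C S : Finset (Fin n)}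
    (hC : IsTrans (FG G) C) (hE0C : E0 a b i0 ⊆ C) :
    s + 1 ≤ ((S ∪ Mm a b) ∩ C).card := by
  classical
  have hne : ∀ i : Fin s, ({a i, b i} ∩ C).Nonempty :=
    fun i => hC _ ⟨a i, b i, hm.1 i, rfl⟩
  choose g hg using hne
  have hgC : ∀ i, g i ∈ C := fun i => (Finset.mem_inter.1 (hg i)).2
  have hgab : ∀ i, g i = a i ∨ g i = b i := by
    intro i
    have := (Finset.mem_inter.1 (hg i)).1
    simpa using this
  have hsubT : E0 a b i0 ∪ (Finset.univ.erase i0).image g ⊆ (S ∪ Mm a b) ∩ C := by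
    intro x hx
    rcases Finset.mem_union.1 hx with hx | hx
    · exact Finset.mem_inter.2 ⟨Finset.mem_union_right _ (E0_subset_Mm i0 hx), hE0C hx⟩
    · obtain ⟨i, _, rfl⟩ := Finset.mem_image.1 hx
      refine Finset.mem_inter.2 ⟨Finset.mem_union_right _ ?_, hgC i⟩
      rcases hgab i with h | h
      · rw [h]
        exact Finset.mem_union_left _ (Finset.mem_image_of_mem a (Finset.mem_univ i))
      · rw [h]
        exact Finset.mem_union_right _ (Finset.mem_image_of_mem b (Finset.mem_univ i))
  have hdisj : Disjoint (E0 a b i0) ((Finset.univ.erase i0).image g) := by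
    rw [Finset.disjoint_left]
    intro x hx hx2
    obtain ⟨i, hi, rfl⟩ := Finset.mem_image.1 hx2
    have hii0 : i ≠ i0 := (Finset.mem_erase.1 hi).1
    simp only [E0, Finset.mem_insert, Finset.mem_singleton] at hx
    rcases hgab i with h | h <;> rw [h] at hx
    · rcases hx with h1 | h1
      · exact (hm.2 i i0 hii0).1 h1
      · exact (hm.2 i i0 hii0).2.2 h1
    · rcases hx with h1 | h1
      · exact (hm.2 i0 i (Ne.symm hii0)).2.2 h1.symm
      · exact (hm.2 i i0 hii0).2.1 h1
  have hinj : Set.InjOn g (Finset.univ.erase i0) := by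
    intro i hi j hj hij
    by_contra hne2
    rcases hgab i with h1 | h1 <;> rcases hgab j with h2 | h2 <;>
      rw [h1, h2] at hij
    · exact (hm.2 i j hne2).1 hij
    · exact (hm.2 i j hne2).2.2 hij
    · exact (hm.2 j i (Ne.symm hne2)).2.2 hij.symm
    · exact (hm.2 i j hne2).2.1 hij
  have hcard : (E0 a b i0 ∪ (Finset.univ.erase i0).image g).card = 2 + (s - 1) := by
    rw [Finset.card_union_of_disjoint hdisj, E0_card i0 hm,
      Finset.card_image_of_injOn hinj, Finset.card_erase_of_mem (Finset.mem_univ i0),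
      Finset.card_univ, Fintype.card_fin]
  have := Finset.card_le_card hsubT
  omega

lemma heart (hm : IsMatching n G s a b) (hs : 1 ≤ s) (S : Finset (Fin n)) :
    (∀ C, Minimal (IsTrans (FG G)) C → s + 1 ≤ ((S ∪ Mm a b) ∩ C).card) ↔
      (∀ D, Minimal (IsTrans (FL G a b i0)) D → s ≤ ((S ∪ Mp a b i0) ∩ D).card) := by
  constructor
  · intro h D hD
    obtain ⟨C, hCmin, hcard1, hsub⟩ := (isTrans_FL_iff i0 hm D).1 hD.1
    have h1 := h C hCmin
    have hsub2 : (S ∪ Mm a b) ∩ C ⊆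
        ((S ∪ Mp a b i0) ∩ (C \ E0 a b i0)) ∪ (C ∩ E0 a b i0) := by
      intro x hx
      rw [Finset.mem_inter] at hx
      by_cases hxE : x ∈ E0 a b i0
      · exact Finset.mem_union_right _ (Finset.mem_inter.2 ⟨hx.2, hxE⟩)
      · refine Finset.mem_union_left _
          (Finset.mem_inter.2 ⟨?_, Finset.mem_sdiff.2 ⟨hx.2, hxE⟩⟩)
        rcases Finset.mem_union.1 hx.1 with hxS | hxM
        · exact Finset.mem_union_left _ hxS
        · rw [Mm_eq_Mp_union_E0 i0] at hxM
          rcases Finset.mem_union.1 hxM with hxM | hxM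
          · exact Finset.mem_union_right _ hxM
          · exact absurd hxM hxE
    have hc2 := Finset.card_le_card hsub2
    have hc3 := Finset.card_union_le ((S ∪ Mp a b i0) ∩ (C \ E0 a b i0)) (C ∩ E0 a b i0)
    have hc4 := Finset.card_le_card
      (Finset.inter_subset_inter (Finset.Subset.refl (S ∪ Mp a b i0)) hsub)
    omega
  · intro h C hCmin
    have hne := E0_inter_nonempty i0 hm hCmin.1
    have hnecard : 0 < (C ∩ E0 a b i0).card := by
      rw [Finset.inter_comm]
      exact Finset.card_pos.2 hne
    by_cases hcase : 2 ≤ (C ∩ E0 a b i0).card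
    · have hCE : C ∩ E0 a b i0 = E0 a b i0 :=
        Finset.eq_of_subset_of_card_le Finset.inter_subset_right
          (by rw [E0_card i0 hm]; omega)
      have hE0C : E0 a b i0 ⊆ C := by
        intro x hx
        have : x ∈ C ∩ E0 a b i0 := by rw [hCE]; exact hx
        exact (Finset.mem_inter.1 this).1
      exact count_case2 i0 hm hs hCmin.1 hE0C
    · have hcard1 : (C ∩ E0 a b i0).card = 1 := by omega
      have htrans : IsTrans (FL G a b i0) (C \ E0 a b i0) :=
        (isTrans_FL_iff i0 hm _).2 ⟨C, hCmin, hcard1, Finset.Subset.refl _⟩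
      obtain ⟨D₀, hD₀min, hD₀sub⟩ := exists_minimal_isTrans htrans
      have h2 : s ≤ ((S ∪ Mp a b i0) ∩ (C \ E0 a b i0)).card :=
        le_trans (h D₀ hD₀min) (Finset.card_le_card
          (Finset.inter_subset_inter (Finset.Subset.refl _) hD₀sub))
      obtain ⟨z, hz⟩ := hne
      rw [Finset.mem_inter] at hz
      have hzmem : z ∉ (S ∪ Mp a b i0) ∩ (C \ E0 a b i0) := by
        rw [Finset.mem_inter]
        rintro ⟨-, hz2⟩
        exact (Finset.mem_sdiff.1 hz2).2 hz.1
      have hins : insert z ((S ∪ Mp a b i0) ∩ (C \ E0 a b i0)) ⊆ (S ∪ Mm a b) ∩ C := by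
        intro x hx
        rcases Finset.mem_insert.1 hx with rfl | hx
        · exact Finset.mem_inter.2 ⟨Finset.mem_union_right _ (E0_subset_Mm i0 hz.1), hz.2⟩
        · rw [Finset.mem_inter] at hx
          refine Finset.mem_inter.2 ⟨?_, (Finset.mem_sdiff.1 hx.2).1⟩
          rcases Finset.mem_union.1 hx.1 with hxS | hxM
          · exact Finset.mem_union_left _ hxS
          · exact Finset.mem_union_right _ (Mp_subset_Mm i0 hxM)
      have := Finset.card_le_card hins
      rw [Finset.card_insert_of_notMem hzmem] at this
      omega

end Heart2

lemma colon_eq_famIdeal_FL {s : ℕ} {G : SimpleGraph (Fin n)} {a b : Fin s → Fin n}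
    (i0 : Fin s) (hm : IsMatching n G s a b) :
    colonOf K n (ssp K n (edgeIdeal K n G) 2)
        ((X (a i0) : MvPolynomial (Fin n) K) * X (b i0))
      = famIdeal K (FL G a b i0) := by
  rw [X_mul_X_eq_sqm (a_ne_b hm i0), edgeIdeal_eq_famIdeal]
  have hFup : ∀ A A' : Finset (Fin n), A ∈ FL G a b i0 → A ⊆ A' → A' ∈ FL G a b i0 := by
    intro A A' hA hAA' D hD
    refine le_trans (hA D hD) (Finset.card_le_card
      (Finset.inter_subset_inter (Finset.union_subset_union_left hAA') (Finset.Subset.refl _)))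
  ext f
  rw [show ({a i0, b i0} : Finset (Fin n)) = E0 a b i0 from rfl,
    mem_colon_ssp (FG G) 2 (by norm_num) f (E0 a b i0),
    mem_famIdeal_upclosed hFup f]
  refine forall₂_congr fun m hm' => ?_
  simp only [FL, Set.mem_setOf_eq]
  norm_num

theorem main_result {s : ℕ} {G : SimpleGraph (Fin n)} {a b : Fin s → Fin n}
    (hs1 : 1 ≤ s) (hm : IsMatching n G s a b) (i0 : Fin s) :
    colonOf K n (ssp K n (edgeIdeal K n G) ((s : ℤ) + 1))
        (∏ i : Fin s, ((X (a i) : MvPolynomial (Fin n) K) * X (b i))) =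
      colonOf K n
        (ssp K n
          (colonOf K n (ssp K n (edgeIdeal K n G) 2)
            ((X (a i0) : MvPolynomial (Fin n) K) * X (b i0)))
          (s : ℤ))
        (∏ i ∈ Finset.univ.erase i0,
          ((X (a i) : MvPolynomial (Fin n) K) * X (b i))) := by
  have hprod_u : (∏ i : Fin s, ((X (a i) : MvPolynomial (Fin n) K) * X (b i)))
      = sqm K (Mm a b) :=
    prod_edges_eq_sqm a b (a_ne_b hm) hm.2 Finset.univ
  have hprod_w : (∏ i ∈ Finset.univ.erase i0, ((X (a i) : MvPolynomial (Fin n) K) * X (b i)))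
      = sqm K (Mp a b i0) :=
    prod_edges_eq_sqm a b (a_ne_b hm) hm.2 (Finset.univ.erase i0)
  rw [hprod_u, hprod_w, colon_eq_famIdeal_FL i0 hm, edgeIdeal_eq_famIdeal]
  ext f
  rw [mem_colon_ssp (FG G) ((s : ℤ) + 1) (by omega) f (Mm a b),
    mem_colon_ssp (FL G a b i0) (s : ℤ) (by omega) f (Mp a b i0)]
  have h1 : ((s : ℤ) + 1).toNat = s + 1 := by omega
  have h2 : ((s : ℤ)).toNat = s := by omega
  rw [h1, h2]
  exact forall₂_congr fun m hm' => heart i0 hm hs1 m.support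

end
end SSPAux

/-- If `1 ≤ s ≤ match(G)` and `u = e_1 ⋯ e_s` is a minimal monomial
generator of `I(G)^[s]` coming from a matching `e_i = a_i b_i`, then
`(I(G)^{s+1} : u) = ((I(G)^{2} : e_1)^{s} : e_2 ⋯ e_s)`. -/
theorem ssp_colon_matching_generator
    (K : Type) [Field K] (n : ℕ) (G : SimpleGraph (Fin n))
    (s : ℕ) (hs1 : 1 ≤ s) (hs2 : s ≤ matchNum n G)
    (a b : Fin s → Fin n) (hm : IsMatching n G s a b)
    (hu : IsMinGen K n (sqPow K n (edgeIdeal K n G) s)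
      (∏ i : Fin s, ((X (a i) : MvPolynomial (Fin n) K) * X (b i)))) :
    colonOf K n (ssp K n (edgeIdeal K n G) ((s : ℤ) + 1))
        (∏ i : Fin s, ((X (a i) : MvPolynomial (Fin n) K) * X (b i))) =
      colonOf K n
        (ssp K n
          (colonOf K n (ssp K n (edgeIdeal K n G) 2)
            ((X (a ⟨0, by omega⟩) : MvPolynomial (Fin n) K) * X (b ⟨0, by omega⟩)))
          (s : ℤ))
        (∏ i ∈ Finset.univ.erase (⟨0, by omega⟩ : Fin s),
          ((X (a i) : MvPolynomial (Fin n) K) * X (b i))) := by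
  exact SSPAux.main_result hs1 hm ⟨0, by omega⟩
end

section
/- For any finite simple graph G, the squarefree part of the third symbolic power is contained in the squarefree part of the second ordinary power: I(G)^{3} ⊆ I(G)^[2]. -/
open MvPolynomial

noncomputable section

/-! Generalities on graded pieces, Betti numbers and Castelnuovo–Mumford regularity
of homogeneous ideals in a polynomial ring, via the Koszul complex. -/

variable (K : Type) [Field K] (n : ℕ)

namespace SSPAux

variable (K : Type) [Field K] (n : ℕ)

/-- The prime ideal generated by the variables outside `S`. -/
noncomputable def PS (S : Finset (Fin n)) : Ideal (MvPolynomial (Fin n) K) :=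
  Ideal.span (MvPolynomial.X '' {v | v ∉ S})

/-- Substitution killing the variables outside `S`. -/
noncomputable def phiS (S : Finset (Fin n)) :
    MvPolynomial (Fin n) K →ₐ[K] MvPolynomial (Fin n) K :=
  aeval (fun v => if v ∈ S then X v else 0)

lemma X_mem_PS (S : Finset (Fin n)) {v : Fin n} (hv : v ∉ S) : X v ∈ PS K n S :=
  Ideal.subset_span ⟨v, hv, rfl⟩

lemma X_not_mem_PS (S : Finset (Fin n)) {w : Fin n} (hw : w ∈ S) : X w ∉ PS K n S := by
  rw [PS, mem_ideal_span_X_image]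
  intro h
  obtain ⟨i, hi, hne⟩ := h (Finsupp.single w 1) (by simp [MvPolynomial.support_X])
  rw [Finsupp.single_apply] at hne
  by_cases hiw : w = i
  · exact hi (hiw ▸ hw)
  · simp [hiw] at hne

lemma sub_phiS_mem (S : Finset (Fin n)) (p : MvPolynomial (Fin n) K) :
    p - phiS K n S p ∈ PS K n S := by
  induction p using MvPolynomial.induction_on with
  | C a => simp [phiS]
  | add p q hp hq =>
      have : p + q - phiS K n S (p + q) = (p - phiS K n S p) + (q - phiS K n S q) := by
        rw [map_add]; ring
      rw [this]; exact add_mem hp hq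
  | mul_X p i hp =>
      have : p * X i - phiS K n S (p * X i)
          = (p - phiS K n S p) * X i + phiS K n S p * (X i - phiS K n S (X i)) := by
        rw [map_mul]; ring
      rw [this]
      refine add_mem (Ideal.mul_mem_right _ _ hp) ?_
      by_cases hi : i ∈ S
      · have : phiS K n S (X i) = X i := by simp [phiS, hi]
        rw [this, sub_self, mul_zero]; exact zero_mem _
      · have : phiS K n S (X i) = 0 := by simp [phiS, hi]
        rw [this, sub_zero]
        exact Ideal.mul_mem_left _ _ (X_mem_PS K n S hi)

lemma ker_phiS (S : Finset (Fin n)) :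
    RingHom.ker (phiS K n S).toRingHom = PS K n S := by
  apply le_antisymm
  · intro p hp
    have h0 : phiS K n S p = 0 := hp
    have := sub_phiS_mem K n S p
    rwa [h0, sub_zero] at this
  · rw [PS, Ideal.span_le]
    rintro _ ⟨v, hv, rfl⟩
    have hv' : v ∉ S := hv
    show phiS K n S (X v) = 0
    simp [phiS, hv']

lemma PS_isPrime (S : Finset (Fin n)) : (PS K n S).IsPrime := by
  rw [← ker_phiS]
  exact RingHom.ker_isPrime _

/-- Evaluation sending variables outside `S` to `X` and variables in `S` to `1`. -/
noncomputable def psiS (S : Finset (Fin n)) :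
    MvPolynomial (Fin n) K →ₐ[K] Polynomial K :=
  aeval (fun v => if v ∈ S then 1 else Polynomial.X)

lemma map_psiS_PS_le (S : Finset (Fin n)) :
    Ideal.map (psiS K n S) (PS K n S) ≤ Ideal.span {(Polynomial.X : Polynomial K)} := by
  rw [PS, Ideal.map_span]
  apply Ideal.span_le.mpr
  rintro _ ⟨_, ⟨v, hv, rfl⟩, rfl⟩
  have hv' : v ∉ S := hv
  have : psiS K n S (X v) = Polynomial.X := by simp [psiS, hv']
  rw [this]
  exact Ideal.subset_span rfl

lemma card_ge_of_mem_PS_pow (S : Finset (Fin n)) (A : Finset (Fin n))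
    (hm : (∏ v ∈ A, X v : MvPolynomial (Fin n) K) ∈ (PS K n S) ^ 3) :
    3 ≤ (A.filter (fun v => v ∉ S)).card := by
  have h1 : psiS K n S (∏ v ∈ A, X v) ∈ Ideal.map (psiS K n S) ((PS K n S) ^ 3) :=
    Ideal.mem_map_of_mem _ hm
  rw [Ideal.map_pow] at h1
  have h2 := Ideal.pow_right_mono (map_psiS_PS_le K n S) 3 h1
  rw [Ideal.span_singleton_pow] at h2
  have h3 : psiS K n S (∏ v ∈ A, X v)
      = Polynomial.X ^ (A.filter (fun v => v ∉ S)).card := by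
    rw [map_prod]
    have : ∀ v ∈ A, psiS K n S (X v)
        = if v ∉ S then (Polynomial.X : Polynomial K) else 1 := by
      intro v _; by_cases hv : v ∈ S <;> simp [psiS, hv]
    rw [Finset.prod_congr rfl this, ← Finset.prod_filter, Finset.prod_const]
  rw [h3, Ideal.mem_span_singleton] at h2
  by_contra hlt
  push_neg at hlt
  have := Polynomial.X_pow_dvd_iff.mp h2 _ hlt
  rw [Polynomial.coeff_X_pow, if_pos rfl] at this
  exact one_ne_zero this

end SSPAux

namespace SSPAux2
open MvPolynomial SSPAux

variable (K : Type) [Field K] (n : ℕ)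

def Indep (G : SimpleGraph (Fin n)) (S : Finset (Fin n)) : Prop :=
  ∀ u ∈ S, ∀ v ∈ S, ¬ G.Adj u v

lemma exists_max_indep (G : SimpleGraph (Fin n)) (T₀ : Finset (Fin n)) (h0 : Indep n G T₀) :
    ∃ S, T₀ ⊆ S ∧ Indep n G S ∧ ∀ v, v ∉ S → ∃ w ∈ S, G.Adj v w := by
  obtain ⟨S, hS, hmax⟩ := Set.Finite.exists_maximalFor Finset.card
    {T : Finset (Fin n) | T₀ ⊆ T ∧ Indep n G T} (Set.toFinite _)
    ⟨T₀, Finset.Subset.refl _, h0⟩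
  refine ⟨S, hS.1, hS.2, ?_⟩
  intro v hv
  by_contra hno; push_neg at hno
  have hind : Indep n G (insert v S) := by
    intro a ha b hb hadj
    rcases Finset.mem_insert.mp ha with ha' | ha' <;>
      rcases Finset.mem_insert.mp hb with hb' | hb'
    · rw [ha', hb'] at hadj; exact G.loopless.irrefl v hadj
    · rw [ha'] at hadj; exact hno b hb' hadj
    · rw [hb'] at hadj; exact hno a ha' hadj.symm
    · exact hS.2 a ha' b hb' hadj
  have hins : insert v S ∈ {T : Finset (Fin n) | T₀ ⊆ T ∧ Indep n G T} :=
    ⟨hS.1.trans (Finset.subset_insert _ _), hind⟩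
  have := hmax hins (Finset.card_le_card (Finset.subset_insert v S))
  rw [Finset.card_insert_of_notMem hv] at this
  omega

lemma edgeIdeal_le_PS (G : SimpleGraph (Fin n)) (S : Finset (Fin n)) (h : Indep n G S) :
    edgeIdeal K n G ≤ PS K n S := by
  rw [edgeIdeal]
  apply Ideal.span_le.mpr
  rintro _ ⟨v, w, hadj, rfl⟩
  by_cases hv : v ∈ S
  · have hw : w ∉ S := fun hw => h v hv w hw hadj
    exact Ideal.mul_mem_left _ _ (X_mem_PS K n S hw)
  · exact Ideal.mul_mem_right _ _ (X_mem_PS K n S hv)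

lemma PS_mem_minimalPrimes (G : SimpleGraph (Fin n)) (S : Finset (Fin n))
    (hind : Indep n G S) (hmax : ∀ v, v ∉ S → ∃ w ∈ S, G.Adj v w) :
    PS K n S ∈ (edgeIdeal K n G).minimalPrimes := by
  constructor
  · exact ⟨PS_isPrime K n S, edgeIdeal_le_PS K n G S hind⟩
  · intro q hq hle
    rw [PS, Ideal.span_le]
    rintro _ ⟨v, hv, rfl⟩
    have hv' : v ∉ S := hv
    obtain ⟨w, hw, hadj⟩ := hmax v hv'
    have hedge : X v * X w ∈ edgeIdeal K n G := Ideal.subset_span ⟨v, w, hadj, rfl⟩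
    rcases hq.1.mem_or_mem (hq.2 hedge) with h | h
    · exact h
    · exact absurd (hle h) (X_not_mem_PS K n S hw)

lemma exists_two_disjoint_edges (G : SimpleGraph (Fin n)) (A : Finset (Fin n))
    (H : ∀ S : Finset (Fin n), Indep n G S → (∀ v, v ∉ S → ∃ w ∈ S, G.Adj v w) →
      3 ≤ (A.filter (fun v => v ∉ S)).card) :
    ∃ u v w z, u ∈ A ∧ v ∈ A ∧ w ∈ A ∧ z ∈ A ∧ G.Adj u v ∧ G.Adj w z ∧
      u ≠ w ∧ u ≠ z ∧ v ≠ w ∧ v ≠ z := by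
  by_contra hno
  push_neg at hno
  by_cases hE : ∃ u v, u ∈ A ∧ v ∈ A ∧ G.Adj u v
  · obtain ⟨u, v, hu, hv, huv⟩ := hE
    have hindB : Indep n G ((A.erase u).erase v) := by
      intro a ha b hb hadj
      have ha1 : a ≠ v := (Finset.mem_erase.mp ha).1
      have ha2 : a ≠ u := (Finset.mem_erase.mp (Finset.mem_erase.mp ha).2).1
      have haA : a ∈ A := Finset.mem_of_mem_erase (Finset.mem_of_mem_erase ha)
      have hb1 : b ≠ v := (Finset.mem_erase.mp hb).1
      have hb2 : b ≠ u := (Finset.mem_erase.mp (Finset.mem_erase.mp hb).2).1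
      have hbA : b ∈ A := Finset.mem_of_mem_erase (Finset.mem_of_mem_erase hb)
      exact hb1 (hno a b u v haA hbA hu hv hadj huv ha2 ha1 hb2)
    obtain ⟨S, hsub, hindS, hmaxS⟩ := exists_max_indep n G _ hindB
    have h3 := H S hindS hmaxS
    have hsubfil : A.filter (fun x => x ∉ S) ⊆ {u, v} := by
      intro x hx
      rw [Finset.mem_filter] at hx
      by_contra hxuv
      rw [Finset.mem_insert, Finset.mem_singleton] at hxuv
      push_neg at hxuv
      have : x ∈ (A.erase u).erase v :=
        Finset.mem_erase.mpr ⟨hxuv.2, Finset.mem_erase.mpr ⟨hxuv.1, hx.1⟩⟩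
      exact hx.2 (hsub this)
    have hle := Finset.card_le_card hsubfil
    have hc : ({u, v} : Finset (Fin n)).card ≤ 2 :=
      (Finset.card_insert_le _ _).trans (by simp)
    omega
  · push_neg at hE
    have hindA : Indep n G A := fun a ha b hb => hE a b ha hb
    obtain ⟨S, hsub, hindS, hmaxS⟩ := exists_max_indep n G A hindA
    have h3 := H S hindS hmaxS
    have hempty : A.filter (fun x => x ∉ S) = ∅ :=
      Finset.filter_eq_empty_iff.mpr (fun {x} hx h => h (hsub hx))
    rw [hempty] at h3
    simp at h3

end SSPAux2

end
/-- For any graph `G`, `I(G)^{3} ⊆ I(G)^[2]`. -/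
theorem ssp_three_le_sqPow_two
    (K : Type) [Field K] (n : ℕ) (G : SimpleGraph (Fin n)) :
    ssp K n (edgeIdeal K n G) 3 ≤ sqPow K n (edgeIdeal K n G) 2 := by
  unfold ssp sqfreePart
  apply Ideal.span_le.mpr
  rintro m ⟨hm, A, rfl⟩
  rw [symbPow, if_neg (by norm_num : ¬(3:ℤ) ≤ 0)] at hm
  have hm' : ∀ S : Finset (Fin n), SSPAux2.Indep n G S →
      (∀ v, v ∉ S → ∃ w ∈ S, G.Adj v w) →
      (∏ v ∈ A, X v : MvPolynomial (Fin n) K) ∈ (SSPAux.PS K n S) ^ 3 := by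
    intro S h1 h2
    have hp := SSPAux2.PS_mem_minimalPrimes K n G S h1 h2
    have h4 := (Submodule.mem_iInf _).mp hm (SSPAux.PS K n S)
    have h5 := (Submodule.mem_iInf _).mp h4 hp
    exact h5
  have Hcard : ∀ S : Finset (Fin n), SSPAux2.Indep n G S →
      (∀ v, v ∉ S → ∃ w ∈ S, G.Adj v w) →
      3 ≤ (A.filter (fun v => v ∉ S)).card :=
    fun S h1 h2 => SSPAux.card_ge_of_mem_PS_pow K n S A (hm' S h1 h2)
  obtain ⟨u, v, w, z, hu, hv, hw, hz, huv, hwz, huw, huz, hvw, hvz⟩ :=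
    SSPAux2.exists_two_disjoint_edges n G A Hcard
  unfold sqPow sqfreePart
  apply Ideal.subset_span
  refine ⟨?_, A, rfl⟩
  have hBA : ({u, v, w, z} : Finset (Fin n)) ⊆ A := by
    intro x hx
    simp only [Finset.mem_insert, Finset.mem_singleton] at hx
    rcases hx with rfl | rfl | rfl | rfl <;> assumption
  have hprodB : (∏ x ∈ ({u, v, w, z} : Finset (Fin n)), X x : MvPolynomial (Fin n) K)
      = (X u * X v) * (X w * X z) := by
    have h1 : u ∉ ({v, w, z} : Finset (Fin n)) := by simp [huv.ne, huw, huz]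
    have h2 : v ∉ ({w, z} : Finset (Fin n)) := by simp [hvw, hvz]
    have h3 : w ∉ ({z} : Finset (Fin n)) := by simp [hwz.ne]
    rw [show ({u, v, w, z} : Finset (Fin n)) = insert u (insert v (insert w {z})) from rfl,
      Finset.prod_insert h1, Finset.prod_insert h2, Finset.prod_insert h3,
      Finset.prod_singleton]
    ring
  have key : (∏ x ∈ A, X x : MvPolynomial (Fin n) K)
      = (∏ x ∈ A \ {u, v, w, z}, X x) * ((X u * X v) * (X w * X z)) := by
    rw [← hprodB, Finset.prod_sdiff hBA]
  rw [key]
  apply Ideal.mul_mem_left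
  rw [sq]
  exact Ideal.mul_mem_mul (Ideal.subset_span ⟨u, v, huv, rfl⟩)
    (Ideal.subset_span ⟨w, z, hwz, rfl⟩)
end
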